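/- Let n ≥ 1, let A be an n×n real matrix and let b ∈ ℝⁿ. Suppose X* = A⁻ ⊙ b satisfies A ⊙ X* = b, and suppose that all the inequalities are strict: (A⁻ ⊙ A)_{kl} < X*_k − X*_l for all k ≠ l. Then X* is the unique solution of the system: every Y ∈ ℝⁿ with A ⊙ Y = b equals X*. -/

import Mathlib

open Matrix

/-- Tropical (max-plus) permanent of a square real matrix:
`per(A) = max over permutations σ of ∑ i, A i (σ i)`. -/
noncomputable def tperm {p : ℕ} (A : Matrix (Fin p) (Fin p) ℝ) : ℝ :=
  Finset.univ.sup' ⟨1, Finset.mem_univ 1⟩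
    (fun σ : Equiv.Perm (Fin p) => ∑ i, A i (σ i))

/-- `del A i j` is the matrix obtained from `A` by deleting row `i` and column `j`. -/
def del {p : ℕ} (A : Matrix (Fin (p+1)) (Fin (p+1)) ℝ) (i j : Fin (p+1)) :
    Matrix (Fin p) (Fin p) ℝ :=
  A.submatrix i.succAbove j.succAbove

/-- Tropical (max-plus) matrix product: `(P ⊙ Q) i j = max_k (P i k + Q k j)`. -/
noncomputable def tmul {l m n : ℕ} (P : Matrix (Fin l) (Fin (m+1)) ℝ)
    (Q : Matrix (Fin (m+1)) (Fin n) ℝ) : Matrix (Fin l) (Fin n) ℝ :=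
  fun i j => Finset.univ.sup' ⟨0, Finset.mem_univ 0⟩ (fun k => P i k + Q k j)

/-- Tropical (max-plus) matrix-vector product: `(P ⊙ x) i = max_k (P i k + x k)`. -/
noncomputable def tmulVec {l m : ℕ} (P : Matrix (Fin l) (Fin (m+1)) ℝ)
    (x : Fin (m+1) → ℝ) : Fin l → ℝ :=
  fun i => Finset.univ.sup' ⟨0, Finset.mem_univ 0⟩ (fun k => P i k + x k)

/-- The ε-adjoint: `adj(A)_{ij} = per(A(j|i))`. -/
noncomputable def tadj {p : ℕ} (A : Matrix (Fin (p+1)) (Fin (p+1)) ℝ) :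
    Matrix (Fin (p+1)) (Fin (p+1)) ℝ :=
  fun i j => tperm (del A j i)

/-- The pseudo-inverse: `A⁻_{ij} = per(A(j|i)) - per(A)`. -/
noncomputable def pinv {p : ℕ} (A : Matrix (Fin (p+1)) (Fin (p+1)) ℝ) :
    Matrix (Fin (p+1)) (Fin (p+1)) ℝ :=
  fun i j => tperm (del A j i) - tperm A

lemma le_tperm {p : ℕ} (B : Matrix (Fin p) (Fin p) ℝ) (σ : Equiv.Perm (Fin p)) :
    (∑ i, B i (σ i)) ≤ tperm B := by
  rw [tperm]; exact Finset.le_sup' (fun σ : Equiv.Perm (Fin p) => ∑ i, B i (σ i)) (Finset.mem_univ σ)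

/-- Tropical Laplace expansion along column `k`. -/
lemma laplace {n : ℕ} (A : Matrix (Fin (n+1)) (Fin (n+1)) ℝ) (k : Fin (n+1)) :
    tperm A = Finset.univ.sup' ⟨0, Finset.mem_univ 0⟩
      (fun j => A j k + tperm (del A j k)) := by
  apply le_antisymm
  · apply Finset.sup'_le
    intro σ _
    set j : Fin (n+1) := σ.symm k with hj
    have hσj : σ j = k := σ.apply_symm_apply k
    have hne : ∀ i : Fin n, σ (j.succAbove i) ≠ k := by
      intro i h
      exact Fin.succAbove_ne j i (σ.injective (h.trans hσj.symm))
    choose τ hτ using fun i => Fin.exists_succAbove_eq (hne i)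
    have hinj : Function.Injective τ := by
      intro a b hab
      have h1 : k.succAbove (τ a) = k.succAbove (τ b) := by rw [hab]
      rw [hτ a, hτ b] at h1
      exact Fin.succAbove_right_injective (σ.injective h1)
    have hbij := Finite.injective_iff_bijective.mp hinj
    have key : (∑ i, A i (σ i)) =
        A j k + ∑ i : Fin n, (del A j k) i ((Equiv.ofBijective τ hbij) i) := by
      rw [Fin.sum_univ_succAbove (fun i => A i (σ i)) j, hσj]
      congr 1
      refine Finset.sum_congr rfl (fun i _ => ?_)
      simp only [del, Matrix.submatrix_apply, Equiv.ofBijective_apply, hτ i]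
    rw [key]
    calc A j k + ∑ i : Fin n, (del A j k) i ((Equiv.ofBijective τ hbij) i)
        ≤ A j k + tperm (del A j k) :=
          add_le_add le_rfl (le_tperm _ _)
      _ ≤ _ := Finset.le_sup' (fun j => A j k + tperm (del A j k)) (Finset.mem_univ j)
  · apply Finset.sup'_le
    intro j _
    rw [tperm]; erw [Finset.add_sup']
    apply Finset.sup'_le
    intro τ _
    set f : Fin (n+1) → Fin (n+1) :=
      j.insertNth k (fun i => k.succAbove (τ i)) with hf
    have hfj : f j = k := by simp [hf]
    have hfs : ∀ i, f (j.succAbove i) = k.succAbove (τ i) := by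
      intro i; simp [hf]
    have hinj : Function.Injective f := by
      intro a b hab
      rcases eq_or_ne a j with ha | ha
      · rcases eq_or_ne b j with hb | hb
        · rw [ha, hb]
        · obtain ⟨i, hi⟩ := Fin.exists_succAbove_eq hb
          rw [ha, hfj, ← hi, hfs] at hab
          exact absurd hab.symm (Fin.succAbove_ne k (τ i))
      · obtain ⟨i, hi⟩ := Fin.exists_succAbove_eq ha
        rcases eq_or_ne b j with hb | hb
        · rw [hb, hfj, ← hi, hfs] at hab
          exact absurd hab (Fin.succAbove_ne k (τ i))
        · obtain ⟨i', hi'⟩ := Fin.exists_succAbove_eq hb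
          rw [← hi, ← hi', hfs, hfs] at hab
          rw [← hi, ← hi', τ.injective (Fin.succAbove_right_injective hab)]
    have hbij := Finite.injective_iff_bijective.mp hinj
    set σ : Equiv.Perm (Fin (n+1)) := Equiv.ofBijective f hbij with hσ
    have key : A j k + ∑ i : Fin n, (del A j k) i (τ i) = ∑ i, A i (σ i) := by
      rw [Fin.sum_univ_succAbove (fun i => A i (σ i)) j]
      have : σ j = k := hfj
      rw [this]
      congr 1
      refine Finset.sum_congr rfl (fun i _ => ?_)
      have : σ (j.succAbove i) = k.succAbove (τ i) := hfs i
      simp only [del, Matrix.submatrix_apply, this]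
    rw [key]
    exact le_tperm A σ

/-- Associativity: `(P ⊙ (A ⊙ Y)) k = max_l ((P ⊙ A)_{kl} + Y_l)`. -/
lemma tmulVec_assoc {n : ℕ} (P A : Matrix (Fin (n+1)) (Fin (n+1)) ℝ)
    (Y : Fin (n+1) → ℝ) (k : Fin (n+1)) :
    tmulVec P (tmulVec A Y) k =
      Finset.univ.sup' ⟨0, Finset.mem_univ 0⟩ (fun l => tmul P A k l + Y l) := by
  unfold tmulVec tmul
  have h1 : ∀ j : Fin (n+1),
      P k j + Finset.univ.sup' ⟨0, Finset.mem_univ 0⟩ (fun l => A j l + Y l)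
      = Finset.univ.sup' ⟨0, Finset.mem_univ 0⟩ (fun l => P k j + A j l + Y l) := by
    intro j
    erw [Finset.add_sup']
    congr 1
    funext l
    ring
  have h2 : ∀ l : Fin (n+1),
      Finset.univ.sup' ⟨0, Finset.mem_univ 0⟩ (fun j => P k j + A j l) + Y l
      = Finset.univ.sup' ⟨0, Finset.mem_univ 0⟩ (fun j => P k j + A j l + Y l) := by
    intro l
    erw [Finset.sup'_add]
  simp only [h1, h2]
  exact Finset.sup'_comm _ _ _

/-- Diagonal of `A⁻ ⊙ A` is zero. -/
lemma tmul_pinv_diag {n : ℕ} (A : Matrix (Fin (n+1)) (Fin (n+1)) ℝ) (k : Fin (n+1)) :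
    tmul (pinv A) A k k = 0 := by
  unfold tmul pinv
  have : (fun j => tperm (del A j k) - tperm A + A j k)
      = fun j : Fin (n+1) => (A j k + tperm (del A j k)) + (- tperm A) := by
    funext j; ring
  rw [this]; erw [← Finset.sup'_add]; rw [← laplace]
  ring

/-- Suppose `X* = A⁻ ⊙ b` satisfies `A ⊙ X* = b` and all inequalities
`(A⁻ ⊙ A)_{kl} < X*_k - X*_l` are strict for `k ≠ l`. Then `X*` is the unique solution:
every `Y` with `A ⊙ Y = b` equals `X*`. -/
theorem stmt7 {n : ℕ} (A : Matrix (Fin (n+1)) (Fin (n+1)) ℝ) (b : Fin (n+1) → ℝ)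
    (hsol : ∀ i, tmulVec A (tmulVec (pinv A) b) i = b i)
    (hstrict : ∀ k l, k ≠ l →
      tmul (pinv A) A k l < tmulVec (pinv A) b k - tmulVec (pinv A) b l) :
    ∀ Y : Fin (n+1) → ℝ, (∀ i, tmulVec A Y i = b i) → Y = tmulVec (pinv A) b := by
  intro Y hY
  set X : Fin (n+1) → ℝ := tmulVec (pinv A) b with hX
  have hb : tmulVec A Y = b := funext hY
  have hXform : ∀ k, X k = Finset.univ.sup' ⟨0, Finset.mem_univ 0⟩
      (fun l => tmul (pinv A) A k l + Y l) := by
    intro k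
    rw [hX]
    conv_lhs => rw [← hb]
    exact tmulVec_assoc (pinv A) A Y k
  have hYleX : ∀ k, Y k ≤ X k := by
    intro k
    rw [hXform k]
    have := Finset.le_sup' (fun l => tmul (pinv A) A k l + Y l) (Finset.mem_univ k)
    rw [tmul_pinv_diag A k, zero_add] at this
    exact this
  funext k
  by_contra hne
  have hYk : Y k < X k := lt_of_le_of_ne (hYleX k) hne
  obtain ⟨l, _, hl⟩ := Finset.exists_mem_eq_sup'
    (⟨0, Finset.mem_univ 0⟩ : (Finset.univ : Finset (Fin (n+1))).Nonempty)
    (fun l => tmul (pinv A) A k l + Y l)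
  rw [← hXform k] at hl
  rcases eq_or_ne k l with rfl | hkl
  · rw [tmul_pinv_diag A k, zero_add] at hl
    exact absurd hl (by linarith)
  · have hs := hstrict k l hkl
    have : X k < X k - X l + Y l := by
      rw [hl]
      have := hYleX l
      linarith
    have hXl : X l < Y l := by linarith
    exact absurd (hYleX l) (not_le.mpr hXl)
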